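/- Let c₀, C₀ > 0. There exist constants c, C > 0, depending only on c₀ and C₀, with the following property. Let τ ∈ ℝ with |τ| > 2, and let p, q, k ∈ ℝ satisfy k = -2q, p ≥ c₀(1+|τ|)^{1/3}, |q| ≥ c₀(1+|τ|)^{1/3}, and max(p, |q|, |k|) ≤ C₀(1+|τ|)^{1/3}. Set r₀ = -p+iq, r₁ = p+iq, r₂ = ik and define n₁ = 2r₀² - 2r₀r₁ - 2r₀ - 2r₀r₂ + 2r₁ + 2r₁r₂ + 2r₂ + 1, n₂ = 1 - 2r₀² - 2r₁r₂, a₁₁ = -4r₀²r₁ - 4r₀²r₂ - 4r₀²r₁r₂ - 2r₀² + 2r₁ - 4r₁r₂² - 4r₁²r₂² - 4r₁²r₂ + 2r₂ + 1, a₂₁ = -2r₀³ - 2r₀²r₁ - 2r₀²r₂ + 2r₀r₁r₂ - r₀ + r₁ - 2r₁r₂² - 2r₁² + 2r₂ - 2r₁r₂ + 1, a₃₁ = r₀(1 - 2r₀ - 2r₁r₂), a₁₂ = a₂₂ = 2(r₁+r₂+1), a₃₂ = 1 - 2r₀² - 2r₁r₂, a₁₃ = a₂₃ = 2, a₃₃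 = 2(r₀-1). Then: |n₁| ≥ c(1+|τ|)^{2/3} and |n₂| ≥ c(1+|τ|)^{2/3}; |a₁₁| ≤ C(1+|τ|)^{4/3}; |a₂₁| + |a₃₁| ≤ C(1+|τ|); |a₁₂| + |a₂₂| + |a₃₃| ≤ C(1+|τ|)^{1/3}; |a₃₂| ≤ C(1+|τ|)^{2/3}; |a₁₃| + |a₂₃| ≤ C. -/

import Mathlib

private lemma nmul {x y : ℂ} {a b : ℝ} (hx : ‖x‖ ≤ a) (hy : ‖y‖ ≤ b) : ‖x * y‖ ≤ a * b := by
  rw [norm_mul]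
  exact mul_le_mul hx hy (norm_nonneg y) ((norm_nonneg x).trans hx)

private lemma npow2 {x : ℂ} {a : ℝ} (hx : ‖x‖ ≤ a) : ‖x ^ 2‖ ≤ a ^ 2 := by
  rw [norm_pow]; exact pow_le_pow_left₀ (norm_nonneg x) hx 2

private lemma npow3 {x : ℂ} {a : ℝ} (hx : ‖x‖ ≤ a) : ‖x ^ 3‖ ≤ a ^ 3 := by
  rw [norm_pow]; exact pow_le_pow_left₀ (norm_nonneg x) hx 3

private lemma L1 (R : ℝ) (hR : 1 ≤ R) :
    4*R^2*R + 4*R^2*R + 4*R^2*R*R + 2*R^2 + 2*R + 4*R*R^2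
      + 4*R^2*R^2 + 4*R^2*R + 2*R + 1 ≤ 31*R^4 := by
  have h3 : R^3 ≤ R^4 := pow_le_pow_right₀ hR (by norm_num)
  have h2 : R^2 ≤ R^4 := pow_le_pow_right₀ hR (by norm_num)
  have h1 : R ≤ R^4 := by
    calc R = R^1 := (pow_one R).symm
      _ ≤ R^4 := pow_le_pow_right₀ hR (by norm_num)
  have h0 : 1 ≤ R^4 := one_le_pow₀ hR
  nlinarith [h3, h2, h1, h0]

private lemma L2 (K t : ℝ) (hK : 1 ≤ K) (ht : 1 ≤ t) : 31*(2*K*t)^4 ≤ 700*K^4*t^4 := by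
  have : (0:ℝ) ≤ K^4*t^4 :=
    mul_nonneg (pow_nonneg (zero_le_one.trans hK) 4) (pow_nonneg (zero_le_one.trans ht) 4)
  nlinarith [this]

private lemma L3 (R : ℝ) (hR : 1 ≤ R) :
    (2*R^3 + 2*R^2*R + 2*R^2*R + 2*R*R*R + R + R + 2*R*R^2
      + 2*R^2 + 2*R + 2*R*R + 1) + R*(1 + 2*R + 2*R*R) ≤ 24*R^3 := by
  have h2 : R^2 ≤ R^3 := pow_le_pow_right₀ hR (by norm_num)
  have h1 : R ≤ R^3 := by
    calc R = R^1 := (pow_one R).symm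
      _ ≤ R^3 := pow_le_pow_right₀ hR (by norm_num)
  have h0 : 1 ≤ R^3 := one_le_pow₀ hR
  nlinarith [h2, h1, h0]

private lemma L4 (K t : ℝ) (hK : 1 ≤ K) (ht : 1 ≤ t) : 24*(2*K*t)^3 ≤ 700*K^4*t^3 := by
  have ht0 : (0:ℝ) ≤ t := zero_le_one.trans ht
  have a : K^3*t^3 ≤ K^4*t^3 :=
    mul_le_mul_of_nonneg_right (pow_le_pow_right₀ hK (by norm_num)) (pow_nonneg ht0 3)
  have b : (0:ℝ) ≤ K^4*t^3 :=
    mul_nonneg (pow_nonneg (zero_le_one.trans hK) 4) (pow_nonneg ht0 3)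
  nlinarith [a, b]

private lemma L5 (K t : ℝ) (hK : 1 ≤ K) (ht : 1 ≤ t) : 16*(2*K*t) ≤ 700*K^4*t := by
  have ht0 : (0:ℝ) ≤ t := zero_le_one.trans ht
  have hK4 : K ≤ K^4 := by
    calc K = K^1 := (pow_one K).symm
      _ ≤ K^4 := pow_le_pow_right₀ hK (by norm_num)
  have a : K*t ≤ K^4*t := mul_le_mul_of_nonneg_right hK4 ht0
  have b : (0:ℝ) ≤ K^4*t := mul_nonneg (pow_nonneg (zero_le_one.trans hK) 4) ht0
  nlinarith [a, b]

private lemma L6 (R : ℝ) (hR : 1 ≤ R) : 1 + 2*R^2 + 2*R*R ≤ 5*R^2 := by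
  nlinarith [one_le_pow₀ (n := 2) hR]

private lemma L7 (K t : ℝ) (hK : 1 ≤ K) (ht : 1 ≤ t) : 5*(2*K*t)^2 ≤ 700*K^4*t^2 := by
  have ht0 : (0:ℝ) ≤ t := zero_le_one.trans ht
  have a : K^2*t^2 ≤ K^4*t^2 :=
    mul_le_mul_of_nonneg_right (pow_le_pow_right₀ hK (by norm_num)) (pow_nonneg ht0 2)
  have b : (0:ℝ) ≤ K^4*t^2 :=
    mul_nonneg (pow_nonneg (zero_le_one.trans hK) 4) (pow_nonneg ht0 2)
  nlinarith [a, b]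

private lemma L8 (K : ℝ) (hK : 1 ≤ K) : (4:ℝ) ≤ 700*K^4 := by
  have : (1:ℝ) ≤ K^4 := one_le_pow₀ hK
  linarith

set_option maxHeartbeats 1000000 in
/-- High-frequency estimates for the entries and minors of the boundary-data
matrix (vertex parameter `Z = 1`) of the KdV equation on a balanced star
graph (Lemma 5.1). -/
theorem boundary_matrix_estimates (c₀ C₀ : ℝ) (hc₀ : 0 < c₀) (hC₀ : 0 < C₀) :
    ∃ c > 0, ∃ C > 0, ∀ τ p q k : ℝ,
      2 < |τ| → k = -2 * q →
      c₀ * (1 + |τ|) ^ ((1:ℝ)/3) ≤ p →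
      c₀ * (1 + |τ|) ^ ((1:ℝ)/3) ≤ |q| →
      max p (max |q| |k|) ≤ C₀ * (1 + |τ|) ^ ((1:ℝ)/3) →
      (let r₀ : ℂ := -(p : ℂ) + (q : ℂ) * Complex.I
       let r₁ : ℂ := (p : ℂ) + (q : ℂ) * Complex.I
       let r₂ : ℂ := (k : ℂ) * Complex.I
       let n₁ : ℂ := 2*r₀^2 - 2*r₀*r₁ - 2*r₀ - 2*r₀*r₂ + 2*r₁ + 2*r₁*r₂ + 2*r₂ + 1
       let n₂ : ℂ := 1 - 2*r₀^2 - 2*r₁*r₂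
       let a₁₁ : ℂ := -4*r₀^2*r₁ - 4*r₀^2*r₂ - 4*r₀^2*r₁*r₂ - 2*r₀^2 + 2*r₁
         - 4*r₁*r₂^2 - 4*r₁^2*r₂^2 - 4*r₁^2*r₂ + 2*r₂ + 1
       let a₂₁ : ℂ := -2*r₀^3 - 2*r₀^2*r₁ - 2*r₀^2*r₂ + 2*r₀*r₁*r₂ - r₀ + r₁
         - 2*r₁*r₂^2 - 2*r₁^2 + 2*r₂ - 2*r₁*r₂ + 1
       let a₃₁ : ℂ := r₀ * (1 - 2*r₀ - 2*r₁*r₂)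
       let a₁₂ : ℂ := 2*(r₁ + r₂ + 1)
       let a₂₂ : ℂ := 2*(r₁ + r₂ + 1)
       let a₃₂ : ℂ := 1 - 2*r₀^2 - 2*r₁*r₂
       let a₁₃ : ℂ := 2
       let a₂₃ : ℂ := 2
       let a₃₃ : ℂ := 2*(r₀ - 1)
       c * (1 + |τ|) ^ ((2:ℝ)/3) ≤ ‖n₁‖ ∧
       c * (1 + |τ|) ^ ((2:ℝ)/3) ≤ ‖n₂‖ ∧
       ‖a₁₁‖ ≤ C * (1 + |τ|) ^ ((4:ℝ)/3) ∧
       ‖a₂₁‖ + ‖a₃₁‖ ≤ C * (1 + |τ|) ∧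
       ‖a₁₂‖ + ‖a₂₂‖ + ‖a₃₃‖ ≤ C * (1 + |τ|) ^ ((1:ℝ)/3) ∧
       ‖a₃₂‖ ≤ C * (1 + |τ|) ^ ((2:ℝ)/3) ∧
       ‖a₁₃‖ + ‖a₂₃‖ ≤ C) := by
  refine ⟨4*c₀^2, by positivity, 700*(max C₀ 1)^4, by positivity, ?_⟩
  intro τ p q k hτ hk hp hq hmax
  intro r₀ r₁ r₂ n₁ n₂ a₁₁ a₂₁ a₃₁ a₁₂ a₂₂ a₃₂ a₁₃ a₂₃ a₃₃
  have hr₀ : r₀ = -(p : ℂ) + (q : ℂ) * Complex.I := rfl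
  have hr₁ : r₁ = (p : ℂ) + (q : ℂ) * Complex.I := rfl
  have hr₂ : r₂ = (k : ℂ) * Complex.I := rfl
  set t := (1 + |τ|) ^ ((1:ℝ)/3) with ht
  have hτ0 : (0:ℝ) < 1 + |τ| := by positivity
  have ht0 : 0 < t := Real.rpow_pos_of_pos hτ0 _
  have ht1 : 1 ≤ t := by
    rw [ht]
    calc (1:ℝ) = (1:ℝ) ^ ((1:ℝ)/3) := (Real.one_rpow _).symm
      _ ≤ (1 + |τ|) ^ ((1:ℝ)/3) :=
        Real.rpow_le_rpow (by norm_num) (by linarith [abs_nonneg τ]) (by norm_num)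
  have ht2 : t^2 = (1 + |τ|) ^ ((2:ℝ)/3) := by
    rw [ht, ← Real.rpow_natCast _ 2, ← Real.rpow_mul hτ0.le]; norm_num
  have ht3 : t^3 = 1 + |τ| := by
    rw [ht, ← Real.rpow_natCast _ 3, ← Real.rpow_mul hτ0.le]
    norm_num
  have ht4 : t^4 = (1 + |τ|) ^ ((4:ℝ)/3) := by
    rw [ht, ← Real.rpow_natCast _ 4, ← Real.rpow_mul hτ0.le]; norm_num
  have hp0 : 0 < p := lt_of_lt_of_le (mul_pos hc₀ ht0) hp
  have hpC : p ≤ C₀ * t := le_trans (le_max_left _ _) hmax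
  have hqC : |q| ≤ C₀ * t := le_trans (le_trans (le_max_left _ _) (le_max_right _ _)) hmax
  have hkC : |k| ≤ C₀ * t := le_trans (le_trans (le_max_right _ _) (le_max_right _ _)) hmax
  set K := max C₀ 1 with hKdef
  have hK1 : 1 ≤ K := le_max_right _ _
  have hCK : C₀ ≤ K := le_max_left _ _
  set R := 2 * K * t with hRdef
  have hKt : (1:ℝ)*1 ≤ K*t := mul_le_mul hK1 ht1 zero_le_one (zero_le_one.trans hK1)
  have hR1 : 1 ≤ R := by rw [hRdef]; linarith
  have hR0 : 0 ≤ R := zero_le_one.trans hR1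
  have hCt : C₀ * t ≤ K * t := mul_le_mul_of_nonneg_right hCK ht0.le
  have habsp : |p| = p := abs_of_pos hp0
  -- norms of the roots
  have hr0 : ‖r₀‖ ≤ R := by
    rw [hr₀]
    refine le_trans (norm_add_le _ _) ?_
    rw [norm_neg, norm_mul, Complex.norm_real, Complex.norm_real,
      Complex.norm_I, Real.norm_eq_abs, Real.norm_eq_abs, mul_one]
    rw [hRdef]; linarith [habsp, hpC, hqC, hCt]
  have hr1 : ‖r₁‖ ≤ R := by
    rw [hr₁]
    refine le_trans (norm_add_le _ _) ?_
    rw [norm_mul, Complex.norm_real, Complex.norm_real, Complex.norm_I,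
      Real.norm_eq_abs, Real.norm_eq_abs, mul_one]
    rw [hRdef]; linarith [habsp, hpC, hqC, hCt]
  have hr2 : ‖r₂‖ ≤ R := by
    rw [hr₂, norm_mul, Complex.norm_real, Complex.norm_I,
      Real.norm_eq_abs, mul_one]
    rw [hRdef]; linarith [hkC, hCt, mul_pos (lt_of_lt_of_le one_pos hK1) ht0]
  -- numeral norms
  have h1c : ‖(1:ℂ)‖ ≤ (1:ℝ) := by norm_num
  have h2c : ‖(2:ℂ)‖ ≤ (2:ℝ) := by norm_num
  have h4c : ‖(4:ℂ)‖ ≤ (4:ℝ) := by norm_num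
  have hm4c : ‖(-4:ℂ)‖ ≤ (4:ℝ) := by norm_num
  have hm2c : ‖(-2:ℂ)‖ ≤ (2:ℝ) := by norm_num
  -- real/imaginary parts for lower bounds
  subst hk
  have e1 : n₁.re = 4*p^2 + 4*p + 1 := by
    show (2*r₀^2 - 2*r₀*r₁ - 2*r₀ - 2*r₀*r₂ + 2*r₁ + 2*r₁*r₂ + 2*r₂ + 1).re = _
    rw [hr₀, hr₁, hr₂]
    push_cast
    simp only [pow_two, Complex.add_re, Complex.sub_re, Complex.mul_re, Complex.mul_im,
      Complex.add_im, Complex.sub_im, Complex.neg_re, Complex.neg_im, Complex.ofReal_re,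
      Complex.ofReal_im, Complex.I_re, Complex.I_im, Complex.one_re, Complex.one_im,
      Complex.re_ofNat, Complex.im_ofNat]
    ring
  have e2 : n₂.im = 8*p*q := by
    show ((1:ℂ) - 2*r₀^2 - 2*r₁*r₂).im = _
    rw [hr₀, hr₁, hr₂]
    push_cast
    simp only [pow_two, Complex.add_re, Complex.sub_re, Complex.mul_re, Complex.mul_im,
      Complex.add_im, Complex.sub_im, Complex.neg_re, Complex.neg_im, Complex.ofReal_re,
      Complex.ofReal_im, Complex.I_re, Complex.I_im, Complex.one_re, Complex.one_im,
      Complex.re_ofNat, Complex.im_ofNat]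
    ring
  have habs_re : |n₁.re| ≤ ‖n₁‖ := by
    exact Complex.abs_re_le_norm _
  have habs_im : |n₂.im| ≤ ‖n₂‖ := by
    exact Complex.abs_im_le_norm _
  have hct0 : (0:ℝ) ≤ c₀ * t := (mul_pos hc₀ ht0).le
  constructor
  · -- lower bound for n₁
    rw [← ht2]
    have hpp : (c₀*t)*(c₀*t) ≤ p*p := mul_le_mul hp hp hct0 hp0.le
    have key : 4*c₀^2*t^2 ≤ 4*p^2 + 4*p + 1 := by nlinarith [hpp, hp0]
    rw [e1] at habs_re
    linarith [habs_re, key, le_abs_self (4*p^2 + 4*p + 1)]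
  constructor
  · -- lower bound for n₂
    rw [← ht2]
    have hmm : (c₀*t)*(c₀*t) ≤ p*|q| := mul_le_mul hp hq hct0 hp0.le
    have him : |n₂.im| = 8*(p*|q|) := by
      rw [e2, abs_mul, abs_mul, habsp]
      norm_num; ring
    have key : 4*c₀^2*t^2 ≤ 8*(p*|q|) := by nlinarith [hmm, sq_nonneg (c₀*t)]
    linarith [habs_im, key, him.symm.le, him.le]
  constructor
  · -- a₁₁
    have b11 : ‖a₁₁‖ ≤ 4*R^2*R + 4*R^2*R + 4*R^2*R*R + 2*R^2 + 2*R + 4*R*R^2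
        + 4*R^2*R^2 + 4*R^2*R + 2*R + 1 := by
      show ‖-4*r₀^2*r₁ - 4*r₀^2*r₂ - 4*r₀^2*r₁*r₂ - 2*r₀^2 + 2*r₁
         - 4*r₁*r₂^2 - 4*r₁^2*r₂^2 - 4*r₁^2*r₂ + 2*r₂ + 1‖ ≤ _
      refine norm_add_le_of_le (norm_add_le_of_le (norm_sub_le_of_le (norm_sub_le_of_le
        (norm_sub_le_of_le (norm_add_le_of_le (norm_sub_le_of_le (norm_sub_le_of_le
        (norm_sub_le_of_le ?_ ?_) ?_) ?_) ?_) ?_) ?_) ?_) ?_) h1c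
      · exact nmul (nmul hm4c (npow2 hr0)) hr1
      · exact nmul (nmul h4c (npow2 hr0)) hr2
      · exact nmul (nmul (nmul h4c (npow2 hr0)) hr1) hr2
      · exact nmul h2c (npow2 hr0)
      · exact nmul h2c hr1
      · exact nmul (nmul h4c hr1) (npow2 hr2)
      · exact nmul (nmul h4c (npow2 hr1)) (npow2 hr2)
      · exact nmul (nmul h4c (npow2 hr1)) hr2
      · exact nmul h2c hr2
    rw [← ht4]
    calc ‖a₁₁‖ ≤ 4*R^2*R + 4*R^2*R + 4*R^2*R*R + 2*R^2 + 2*R + 4*R*R^2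
        + 4*R^2*R^2 + 4*R^2*R + 2*R + 1 := b11
      _ ≤ 31*R^4 := L1 R hR1
      _ ≤ 700*K^4*t^4 := by rw [hRdef]; exact L2 K t hK1 ht1
  constructor
  · -- a₂₁ + a₃₁
    have b21 : ‖a₂₁‖ ≤ 2*R^3 + 2*R^2*R + 2*R^2*R + 2*R*R*R + R + R + 2*R*R^2
        + 2*R^2 + 2*R + 2*R*R + 1 := by
      show ‖-2*r₀^3 - 2*r₀^2*r₁ - 2*r₀^2*r₂ + 2*r₀*r₁*r₂ - r₀ + r₁
         - 2*r₁*r₂^2 - 2*r₁^2 + 2*r₂ - 2*r₁*r₂ + 1‖ ≤ _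
      refine norm_add_le_of_le (norm_sub_le_of_le (norm_add_le_of_le (norm_sub_le_of_le
        (norm_sub_le_of_le (norm_add_le_of_le (norm_sub_le_of_le (norm_add_le_of_le
        (norm_sub_le_of_le (norm_sub_le_of_le ?_ ?_) ?_) ?_) ?_) ?_) ?_) ?_) ?_) ?_) h1c
      · exact nmul hm2c (npow3 hr0)
      · exact nmul (nmul h2c (npow2 hr0)) hr1
      · exact nmul (nmul h2c (npow2 hr0)) hr2
      · exact nmul (nmul (nmul h2c hr0) hr1) hr2
      · exact hr0
      · exact hr1
      · exact nmul (nmul h2c hr1) (npow2 hr2)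
      · exact nmul h2c (npow2 hr1)
      · exact nmul h2c hr2
      · exact nmul (nmul h2c hr1) hr2
    have b31 : ‖a₃₁‖ ≤ R*(1 + 2*R + 2*R*R) := by
      show ‖r₀ * (1 - 2*r₀ - 2*r₁*r₂)‖ ≤ _
      refine nmul hr0 ?_
      refine le_trans (norm_sub_le_of_le (norm_sub_le_of_le h1c (nmul h2c hr0))
        (nmul (nmul h2c hr1) hr2)) ?_
      linarith
    rw [← ht3]
    calc ‖a₂₁‖ + ‖a₃₁‖ ≤ (2*R^3 + 2*R^2*R + 2*R^2*R + 2*R*R*R + R + R + 2*R*R^2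
        + 2*R^2 + 2*R + 2*R*R + 1) + R*(1 + 2*R + 2*R*R) := add_le_add b21 b31
      _ ≤ 24*R^3 := L3 R hR1
      _ ≤ 700*K^4*t^3 := by rw [hRdef]; exact L4 K t hK1 ht1
  constructor
  · -- a₁₂ + a₂₂ + a₃₃
    have b12 : ‖a₁₂‖ ≤ 2*(R + R + 1) := by
      show ‖(2:ℂ)*(r₁ + r₂ + 1)‖ ≤ _
      exact nmul h2c (norm_add_le_of_le (norm_add_le_of_le hr1 hr2) h1c)
    have b22 : ‖a₂₂‖ ≤ 2*(R + R + 1) := by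
      show ‖(2:ℂ)*(r₁ + r₂ + 1)‖ ≤ _
      exact nmul h2c (norm_add_le_of_le (norm_add_le_of_le hr1 hr2) h1c)
    have b33 : ‖a₃₃‖ ≤ 2*(R + 1) := by
      show ‖(2:ℂ)*(r₀ - 1)‖ ≤ _
      exact nmul h2c (norm_sub_le_of_le hr0 h1c)
    calc ‖a₁₂‖ + ‖a₂₂‖ + ‖a₃₃‖ ≤ 2*(R + R + 1) + 2*(R + R + 1) + 2*(R + 1) := by
          linarith [b12, b22, b33]
      _ ≤ 16*R := by linarith [hR1]
      _ ≤ 700*K^4*t := by rw [hRdef]; exact L5 K t hK1 ht1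
  constructor
  · -- a₃₂
    have b32 : ‖a₃₂‖ ≤ 1 + 2*R^2 + 2*R*R := by
      show ‖(1:ℂ) - 2*r₀^2 - 2*r₁*r₂‖ ≤ _
      exact norm_sub_le_of_le (norm_sub_le_of_le h1c (nmul h2c (npow2 hr0)))
        (nmul (nmul h2c hr1) hr2)
    rw [← ht2]
    calc ‖a₃₂‖ ≤ 1 + 2*R^2 + 2*R*R := b32
      _ ≤ 5*R^2 := L6 R hR1
      _ ≤ 700*K^4*t^2 := by rw [hRdef]; exact L7 K t hK1 ht1
  · -- a₁₃ + a₂₃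
    have hfour : ‖a₁₃‖ + ‖a₂₃‖ ≤ 4 := by
      show ‖(2:ℂ)‖ + ‖(2:ℂ)‖ ≤ (4:ℝ)
      norm_num
    linarith [hfour, L8 K hK1]
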